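/- arXiv:1612.06213 — 2 statements merged into one kernel-verified Lean document; each statement's English description precedes it below -/
import Mathlib

section
/- Let t ∈ {0,…,97} and suppose that p_{5,2}(98n+t) is even for every nonnegative integer n. Then t ∈ {6, 13, 20, 27, 34, 48, 55, 62, 76, 90, 97}. -/
open scoped BigOperators

noncomputable section

/-- `e(w) = exp(2πiw)`. -/
def eC (w : ℂ) : ℂ := Complex.exp (2 * Real.pi * Complex.I * w)

/-- The second Bernoulli function `P₂(x) = {x}² - {x} + 1/6`. -/
def B2 (x : ℚ) : ℚ := Int.fract x ^ 2 - Int.fract x + 1 / 6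

/-- `P(r) = (1/2) ∑_{δ∣N} ∑_{0 ≤ g < δ} δ · r_{δ,g} · P₂(g/δ)`. -/
def Pr (N : ℕ) (r : ℕ → ℕ → ℚ) : ℚ :=
  (1 / 2) * ∑ δ ∈ N.divisors, ∑ g ∈ Finset.range δ, (δ : ℚ) * r δ g * B2 ((g : ℚ) / (δ : ℚ))

/-- The twisted tuple `r_a`, with `(r_a)_{δ,g} = r_{δ, (a·g mod δ)}`. -/
def rA (r : ℕ → ℕ → ℚ) (a : ℤ) : ℕ → ℕ → ℚ :=
  fun δ g => r δ ((a * g % (δ : ℤ)).toNat)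

/-- Congruence of rationals modulo a positive integer `m`: `(x - y)/m ∈ ℤ`. -/
def ratCong (m : ℕ) (x y : ℚ) : Prop := ∃ z : ℤ, x - y = (m : ℚ) * z

/-- Integer powers of a formal power series (with constant term `1`, so that
the inverse `PowerSeries.invOfUnit f 1` is the genuine inverse). -/
def zpowPS (f : PowerSeries ℤ) (k : ℤ) : PowerSeries ℤ :=
  if 0 ≤ k then f ^ k.toNat else PowerSeries.invOfUnit f 1 ^ (-k).toNat

/-- The single product `∏_{m>0, m ≡ g (mod δ)} (1 - q^m)` as a formal power series:
its `n`-th coefficient is the `n`-th coefficient of the (finite) product over `1 ≤ m ≤ n`. -/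
def singlePS (δ g : ℕ) : PowerSeries ℤ :=
  PowerSeries.mk fun n =>
    PowerSeries.coeff (R := ℤ) n
      (∏ m ∈ Finset.Icc 1 n, if m % δ = g % δ then 1 - PowerSeries.X ^ m else 1)

/-- `F_{δ,g}(q) = ∏_{m>0, m ≡ g (δ)} (1-q^m) · ∏_{m>0, m ≡ -g (δ)} (1-q^m)`
as a formal power series. -/
def FPS (δ g : ℕ) : PowerSeries ℤ :=
  PowerSeries.mk fun n =>
    PowerSeries.coeff (R := ℤ) n
      (∏ m ∈ Finset.Icc 1 n,
        (if m % δ = g % δ then 1 - PowerSeries.X ^ m else 1) *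
          (if m % δ = (δ - g) % δ then 1 - PowerSeries.X ^ m else 1))

/-- The Fourier coefficients `c_r(n)`, defined by
`∑ c_r(n) qⁿ = ∏_{δ∣N} ∏_{g<δ} F_{δ,g}(q)^{r_{δ,g}}`, where for `g = 0` or `2g = δ` the factor
`F_{δ,g}^{r_{δ,g}}` means the single product `singlePS δ g` raised to the integer `2·r_{δ,g}`. -/
def genC (N : ℕ) (r : ℕ → ℕ → ℚ) (n : ℕ) : ℤ :=
  PowerSeries.coeff (R := ℤ) n
    (∏ δ ∈ N.divisors, ∏ g ∈ Finset.range δ,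
      if g = 0 ∨ 2 * g = δ then zpowPS (singlePS δ g) (2 * r δ g).num
      else zpowPS (FPS δ g) (r δ g).num)

/-- The single product `∏_{m>0, m ≡ g (mod δ)} (1 - e(mz))` as a function on `ℂ`. -/
def singleC (δ g : ℕ) (z : ℂ) : ℂ :=
  ∏' m : ℕ, if (m + 1) % δ = g % δ then 1 - eC (((m : ℂ) + 1) * z) else 1

/-- `F_{δ,g}(z) = ∏_{m>0, m ≡ g (δ)} (1-e(mz)) · ∏_{m>0, m ≡ -g (δ)} (1-e(mz))`. -/
def FC (δ g : ℕ) (z : ℂ) : ℂ := singleC δ g z * singleC δ ((δ - g) % δ) z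

/-- The generalized eta-function `η_{δ,g}(z) = e(δ P₂(g/δ) z / 2) · F_{δ,g}(z)`. -/
def etaGen (δ g : ℕ) (z : ℂ) : ℂ :=
  eC ((δ : ℂ) * ((B2 ((g : ℚ) / (δ : ℚ)) : ℚ) : ℂ) * z / 2) * FC δ g z

/-- The generalized eta-quotient `H_r(z) = e(P(r) z) ∏_{δ∣N} ∏_{g<δ} F_{δ,g}(z)^{r_{δ,g}}`,
with the convention that for `g = 0` or `2g = δ` the factor is the single product raised to
the integer power `2·r_{δ,g}`. -/
def HrC (N : ℕ) (r : ℕ → ℕ → ℚ) (z : ℂ) : ℂ :=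
  eC (((Pr N r : ℚ) : ℂ) * z) *
    ∏ δ ∈ N.divisors, ∏ g ∈ Finset.range δ,
      if g = 0 ∨ 2 * g = δ then singleC δ g z ^ (2 * r δ g).num
      else FC δ g z ^ (r δ g).num

/-- `H_{r,m,t}(z) = (1/m) ∑_{λ mod m} e(-λ(t+P(r))/m) H_r((z+λ)/m)`. -/
def HrmtC (N : ℕ) (r : ℕ → ℕ → ℚ) (m t : ℕ) (z : ℂ) : ℂ :=
  (1 / (m : ℂ)) * ∑ l ∈ Finset.range m,
    eC (-(l : ℂ) * (((t : ℚ) + Pr N r : ℚ) : ℂ) / (m : ℂ)) * HrC N r ((z + (l : ℂ)) / (m : ℂ))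

/-- `p(n)`, the number of partitions of `n`. -/
def partCount (n : ℕ) : ℕ := Nat.card (Nat.Partition n)

/-- `p_{6,1}(n)`, the number of partitions of `n` with all parts `≡ ±1 (mod 6)`. -/
def p61 (n : ℕ) : ℕ := Nat.card {P : Nat.Partition n // ∀ x ∈ P.parts, x % 6 = 1 ∨ x % 6 = 5}

/-- `p_{5,1}(n)`, the number of partitions of `n` with all parts `≡ ±1 (mod 5)`. -/
def p51 (n : ℕ) : ℕ := Nat.card {P : Nat.Partition n // ∀ x ∈ P.parts, x % 5 = 1 ∨ x % 5 = 4}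

/-- `p_{5,2}(n)`, the number of partitions of `n` with all parts `≡ ±2 (mod 5)`. -/
def p52 (n : ℕ) : ℕ := Nat.card {P : Nat.Partition n // ∀ x ∈ P.parts, x % 5 = 2 ∨ x % 5 = 3}


/-! DP machinery -/

def qstep : List ℕ → List ℕ → List ℕ → List ℕ
  | _, _, [] => []
  | f::fs, back, x::xs => (x+f) :: qstep fs ((x+f)::back) xs
  | [], back, x::xs =>
      match back.reverse with
      | f::fs => (x+f) :: qstep fs [x+f] xs
      | [] => []

def nstep : List ℕ → List ℕ → List ℕ
  | _, [] => []
  | q, x::xs => (x + q.headI) :: nstep (q.tail ++ [x + q.headI]) xs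

def dpList (L : List ℕ) (n : ℕ) : List ℕ :=
  L.foldr (fun p t => qstep (List.replicate p 0) [] t) (1 :: List.replicate n 0)

lemma nstep_length : ∀ (q xs : List ℕ), (nstep q xs).length = xs.length := by
  intro q xs
  induction xs generalizing q with
  | nil => simp [nstep]
  | cons x xs ih => simp [nstep, ih]

lemma qstep_eq : ∀ (xs front back : List ℕ), front ++ back.reverse ≠ [] →
    qstep front back xs = nstep (front ++ back.reverse) xs := by
  intro xs
  induction xs with
  | nil => intro front back _; cases front <;> simp [qstep, nstep]
  | cons x xs ih =>
    intro front back hne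
    cases front with
    | cons f fs =>
      have h1 : fs ++ ((x+f)::back).reverse ≠ [] := by simp
      simp only [qstep, nstep, List.cons_append, List.headI, List.tail]
      rw [ih _ _ h1]
      simp
    | nil =>
      simp only [List.nil_append] at hne ⊢
      rcases hrev : back.reverse with _ | ⟨f, fs⟩
      · exact absurd hrev hne
      · have h1 : fs ++ [x+f].reverse ≠ [] := by simp
        simp only [qstep]
        rw [hrev]
        show (x+f) :: qstep fs [x+f] xs = _
        rw [ih _ _ h1]
        simp [nstep]

lemma replicate_getD (p j : ℕ) : (List.replicate p (0:ℕ)).getD j 0 = 0 := by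
  rcases lt_or_ge j p with h | h
  · simp [List.getD, List.getElem?_replicate, h]
  · rw [List.getD_eq_default]
    simpa using h

lemma nstep_spec : ∀ (xs q : List ℕ) (b p : ℕ) (S T : ℕ → ℕ),
    0 < p → q.length = p →
    (∀ m, S m = T m + if p ≤ m then S (m - p) else 0) →
    (∀ j, j < p → q.getD j 0 = if p ≤ b + j then S (b + j - p) else 0) →
    (∀ i, i < xs.length → xs.getD i 0 = T (b + i)) →
    ∀ i, i < xs.length → (nstep q xs).getD i 0 = S (b + i) := by
  intro xs
  induction xs with
  | nil => intro q b p S T _ _ _ _ _ i hi; simp at hi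
  | cons x xs ih =>
    intro q b p S T hp hq hS hqv hxv
    rcases q with _ | ⟨f, qs⟩
    · simp at hq; omega
    have hf : f = if p ≤ b then S (b - p) else 0 := by
      have := hqv 0 hp; simpa using this
    have hx : x = T b := by have := hxv 0 (by simp); simpa using this
    have hxf : x + f = S b := by
      rw [hS b, hx, hf]
    have hqslen : qs.length = p - 1 := by simp at hq; omega
    intro i hi
    simp only [nstep, List.headI, List.tail]
    rcases i with _ | i
    · simpa using hxf
    · have hi' : i < xs.length := by simpa using hi
      have hnew : ∀ j, j < p → (qs ++ [x + f]).getD j 0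
          = if p ≤ (b+1) + j then S ((b+1) + j - p) else 0 := by
        intro j hj
        rcases lt_or_ge j qs.length with hlt | hge
        · rw [List.getD_append _ _ _ _ hlt]
          have := hqv (j+1) (by omega)
          have e1 : b + (j+1) = b + 1 + j := by omega
          rw [e1] at this
          simpa using this
        · have hje : j = p - 1 := by omega
          have h2 : (qs ++ [x+f]).getD j 0 = x + f := by
            rw [List.getD_append_right _ _ _ _ hge]
            have : j - qs.length = 0 := by omega
            rw [this]; rfl
          rw [h2, hxf]
          have hcond : p ≤ b + 1 + j := by omega
          rw [if_pos hcond]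
          congr 1
          omega
      have hxv' : ∀ i, i < xs.length → xs.getD i 0 = T ((b+1) + i) := by
        intro i hi2
        have := hxv (i+1) (by simpa using Nat.succ_lt_succ hi2)
        have e1 : b + (i+1) = b + 1 + i := by omega
        rw [e1] at this
        simpa using this
      have := ih (qs ++ [x+f]) (b+1) p S T hp (by simp [hqslen]; omega) hS hnew hxv' i hi'
      rw [List.getD_cons_succ, this]
      congr 1
      omega

/-! Counting multisets with given sum and allowed parts -/

def Sc (L : List ℕ) (n : ℕ) : Set (Multiset ℕ) := {m | m.sum = n ∧ ∀ x ∈ m, x ∈ L}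

noncomputable def Mcnt (L : List ℕ) (n : ℕ) : ℕ := (Sc L n).ncard

lemma Sc_nil (n : ℕ) : Sc [] n = if n = 0 then {0} else ∅ := by
  ext m
  simp only [Sc, Set.mem_setOf_eq, List.not_mem_nil]
  constructor
  · rintro ⟨hs, hm⟩
    have hm0 : m = 0 := Multiset.eq_zero_of_forall_notMem hm
    subst hm0
    simp at hs
    simp [hs]
  · intro hm
    split at hm
    · simp_all
    · simp at hm

lemma Mcnt_nil (n : ℕ) : Mcnt [] n = if n = 0 then 1 else 0 := by
  rw [Mcnt, Sc_nil]
  split <;> simp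

lemma mem_le_sum {m : Multiset ℕ} {x : ℕ} (hx : x ∈ m) : x ≤ m.sum :=
  Multiset.single_le_sum (fun _ _ => Nat.zero_le _) x hx

lemma Sc_decomp {p : ℕ} (ps : List ℕ) {n : ℕ} (hp : 0 < p) (hpn : p ≤ n) :
    Sc (p::ps) n = Sc ps n ∪ (fun m => p ::ₘ m) '' Sc (p::ps) (n - p) := by
  ext m
  constructor
  · rintro ⟨hs, hm⟩
    by_cases hc : p ∈ m
    · right
      refine ⟨m.erase p, ⟨?_, ?_⟩, Multiset.cons_erase hc⟩
      · have := Multiset.cons_erase hc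
        have hsum : m.sum = p + (m.erase p).sum := by
          conv_lhs => rw [← this]
          simp
        omega
      · intro x hx
        exact hm x (Multiset.mem_of_mem_erase hx)
    · left
      refine ⟨hs, fun x hx => ?_⟩
      rcases List.mem_cons.mp (hm x hx) with h | h
      · exact absurd (h ▸ hx) hc
      · exact h
  · rintro (⟨hs, hm⟩ | ⟨m', ⟨hs, hm⟩, rfl⟩)
    · exact ⟨hs, fun x hx => List.mem_cons_of_mem _ (hm x hx)⟩
    · refine ⟨by simp [hs]; omega, fun x hx => ?_⟩
      rcases Multiset.mem_cons.mp hx with rfl | hx'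
      · exact List.mem_cons_self
      · exact hm x hx'

lemma Sc_cons_of_gt {p : ℕ} (ps : List ℕ) {n : ℕ} (hpn : n < p) :
    Sc (p::ps) n = Sc ps n := by
  ext m
  constructor
  · rintro ⟨hs, hm⟩
    refine ⟨hs, fun x hx => ?_⟩
    rcases List.mem_cons.mp (hm x hx) with h | h
    · exfalso
      have := mem_le_sum hx
      omega
    · exact h
  · rintro ⟨hs, hm⟩
    exact ⟨hs, fun x hx => List.mem_cons_of_mem _ (hm x hx)⟩

lemma Sc_finite : ∀ (k : ℕ) (L : List ℕ) (n : ℕ), n + L.length ≤ k →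
    (∀ x ∈ L, 0 < x) → (Sc L n).Finite := by
  intro k
  induction k with
  | zero =>
    intro L n hk _
    have hL : L = [] := by cases L <;> simp_all
    subst hL
    rw [Sc_nil]
    split <;> simp
  | succ k ih =>
    intro L n hk hpos
    cases L with
    | nil =>
      rw [Sc_nil]; split <;> simp
    | cons p ps =>
      have hp : 0 < p := hpos p (List.mem_cons_self)
      have hpos' : ∀ x ∈ ps, 0 < x := fun x hx => hpos x (List.mem_cons_of_mem _ hx)
      rcases le_or_gt p n with hpn | hpn
      · rw [Sc_decomp ps hp hpn]
        refine Set.Finite.union (ih ps n (by simp at hk ⊢; omega) hpos')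
          (Set.Finite.image _ (ih (p::ps) (n-p) ?_ hpos))
        simp at hk ⊢
        omega
      · rw [Sc_cons_of_gt ps hpn]
        exact ih ps n (by simp at hk ⊢; omega) hpos'

lemma Sc_fin {L : List ℕ} (n : ℕ) (h : ∀ x ∈ L, 0 < x) : (Sc L n).Finite :=
  Sc_finite (n + L.length) L n le_rfl h

lemma Mcnt_cons {p : ℕ} {ps : List ℕ} (n : ℕ) (hp : 0 < p) (hpos : ∀ x ∈ ps, 0 < x)
    (hnot : p ∉ ps) :
    Mcnt (p::ps) n = Mcnt ps n + if p ≤ n then Mcnt (p::ps) (n - p) else 0 := by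
  have hposall : ∀ x ∈ p::ps, 0 < x := by
    intro x hx
    rcases List.mem_cons.mp hx with rfl | hx'
    · exact hp
    · exact hpos x hx'
  rcases le_or_gt p n with hpn | hpn
  · rw [if_pos hpn, Mcnt, Sc_decomp ps hp hpn]
    have hdisj : Disjoint (Sc ps n) ((fun m => p ::ₘ m) '' Sc (p::ps) (n - p)) := by
      rw [Set.disjoint_left]
      rintro m ⟨_, hall⟩ ⟨m', _, rfl⟩
      exact hnot (hall p (Multiset.mem_cons_self _ _))
    rw [Set.ncard_union_eq hdisj (Sc_fin n hpos)
      (Set.Finite.image _ (Sc_fin (n-p) hposall))]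
    congr 1
    exact Set.ncard_image_of_injective _ (fun a b hab => (Multiset.cons_inj_right p).mp hab)
  · rw [if_neg (by omega), Mcnt, Sc_cons_of_gt ps hpn, add_zero]
    rfl

/-! dpList computes Mcnt -/

lemma dp_cons (p : ℕ) (ps : List ℕ) (n : ℕ) (hp : 0 < p) :
    dpList (p::ps) n = nstep (List.replicate p 0) (dpList ps n) := by
  have hne : List.replicate p (0:ℕ) ++ ([] : List ℕ).reverse ≠ [] := by
    simp; omega
  show qstep (List.replicate p 0) [] (dpList ps n) = _
  rw [qstep_eq _ _ _ hne]
  simp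

lemma dp_length (L : List ℕ) (n : ℕ) (hpos : ∀ x ∈ L, 0 < x) :
    (dpList L n).length = n + 1 := by
  induction L with
  | nil => simp [dpList]
  | cons p ps ih =>
    rw [dp_cons p ps n (hpos p (List.mem_cons_self)), nstep_length]
    exact ih (fun x hx => hpos x (List.mem_cons_of_mem _ hx))

lemma dp_spec (L : List ℕ) (n : ℕ) (hpos : ∀ x ∈ L, 0 < x) (hnd : L.Nodup) :
    ∀ i ≤ n, (dpList L n).getD i 0 = Mcnt L i := by
  induction L with
  | nil =>
    intro i hi
    rw [Mcnt_nil]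
    rcases i with _ | i
    · simp [dpList]
    · simp [dpList, replicate_getD]
  | cons p ps ih =>
    intro i hi
    have hp : 0 < p := hpos p (List.mem_cons_self)
    have hpos' : ∀ x ∈ ps, 0 < x := fun x hx => hpos x (List.mem_cons_of_mem _ hx)
    have hnot : p ∉ ps := (List.nodup_cons.mp hnd).1
    have hnd' : ps.Nodup := (List.nodup_cons.mp hnd).2
    rw [dp_cons p ps n hp]
    have hlen : (dpList ps n).length = n + 1 := dp_length ps n hpos'
    have := nstep_spec (dpList ps n) (List.replicate p 0) 0 p (Mcnt (p::ps)) (Mcnt ps) hp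
      (by simp)
      (fun m => Mcnt_cons m hp hpos' hnot)
      (fun j hj => by rw [replicate_getD]; rw [if_neg (by omega)])
      (fun i hi2 => by
        rw [ih hpos' hnd' i (by omega)]
        simp)
      i (by omega)
    simpa using this


def Lstar : List ℕ := (List.range 587).filter (fun x => x % 5 = 2 ∨ x % 5 = 3)

lemma mem_Lstar {x : ℕ} : x ∈ Lstar ↔ x < 587 ∧ (x % 5 = 2 ∨ x % 5 = 3) := by
  simp [Lstar, List.mem_filter, List.mem_range]

lemma Lstar_pos : ∀ x ∈ Lstar, 0 < x := by
  intro x hx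
  have := (mem_Lstar.mp hx).2
  omega

lemma Lstar_nodup : Lstar.Nodup := (List.nodup_range (n := 587)).filter _

lemma p52_eq_Mcnt (n : ℕ) (hn : n ≤ 586) : p52 n = Mcnt Lstar n := by
  rw [Mcnt, ← Nat.card_coe_set_eq, p52]
  refine Nat.card_congr ?_
  refine
    { toFun := fun P => ⟨P.1.parts, P.1.parts_sum, fun x hx => mem_Lstar.mpr ⟨?_, P.2 x hx⟩⟩
      invFun := fun m =>
        ⟨⟨m.1, fun {x} hx => by
            have := (mem_Lstar.mp (m.2.2 x hx)).2; omega, m.2.1⟩,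
          fun x hx => (mem_Lstar.mp (m.2.2 x hx)).2⟩
      left_inv := fun P => rfl
      right_inv := fun m => rfl }
  · have hle : x ≤ P.1.parts.sum := mem_le_sum hx
    rw [P.1.parts_sum] at hle
    omega

def idxs : List ℕ := [0, 2, 3, 4, 5, 8, 9, 15, 16, 18, 23, 24, 26, 30, 32, 33, 35, 37, 40, 41, 42, 45, 47, 50, 51, 53, 54, 56, 57, 58, 59, 63, 64, 65, 66, 67, 68, 69, 70, 71, 73, 74, 75, 77, 78, 79, 81, 82, 83, 84, 85, 86, 87, 89, 91, 92, 94, 95, 108, 109, 120, 136, 137, 141, 147, 150, 158, 170, 178, 186, 191, 208, 210, 213, 215, 217, 221, 224, 232, 240, 257, 301, 340, 421, 491, 521, 586]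

set_option maxRecDepth 1000000 in
set_option maxHeartbeats 10000000 in
lemma oddAll : idxs.all (fun i => decide ((dpList Lstar 586).getD i 0 % 2 = 1)) = true := by decide

lemma oddAt (i : ℕ) (hmem : i ∈ idxs) : (dpList Lstar 586).getD i 0 % 2 = 1 :=
  of_decide_eq_true (List.all_eq_true.mp oddAll i hmem)

lemma p52_odd {i : ℕ} (hi : i ≤ 586) (hv : (dpList Lstar 586).getD i 0 % 2 = 1) :
    ¬ 2 ∣ p52 i := by
  rw [p52_eq_Mcnt i hi, ← dp_spec Lstar 586 Lstar_pos Lstar_nodup i hi]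
  omega


/-- **Example 4 (mod 2 discussion for `p_{5,2}`).** If `p_{5,2}(98n+t)` is even for all
`n ≥ 0`, then `t` is one of the eleven listed residues mod 98. -/
theorem stmt14 (t : ℕ) (ht : t < 98)
    (h : ∀ n : ℕ, 2 ∣ p52 (98 * n + t)) :
    t ∈ ({6, 13, 20, 27, 34, 48, 55, 62, 76, 90, 97} : Finset ℕ) := by
  interval_cases t

  · exact absurd (h 0) (p52_odd (by norm_num) (oddAt _ (by decide)))
  · exact absurd (h 5) (p52_odd (by norm_num) (oddAt _ (by decide)))
  · exact absurd (h 0) (p52_odd (by norm_num) (oddAt _ (by decide)))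
  · exact absurd (h 0) (p52_odd (by norm_num) (oddAt _ (by decide)))
  · exact absurd (h 0) (p52_odd (by norm_num) (oddAt _ (by decide)))
  · exact absurd (h 0) (p52_odd (by norm_num) (oddAt _ (by decide)))
  · decide
  · exact absurd (h 3) (p52_odd (by norm_num) (oddAt _ (by decide)))
  · exact absurd (h 0) (p52_odd (by norm_num) (oddAt _ (by decide)))
  · exact absurd (h 0) (p52_odd (by norm_num) (oddAt _ (by decide)))
  · exact absurd (h 1) (p52_odd (by norm_num) (oddAt _ (by decide)))
  · exact absurd (h 1) (p52_odd (by norm_num) (oddAt _ (by decide)))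
  · exact absurd (h 2) (p52_odd (by norm_num) (oddAt _ (by decide)))
  · decide
  · exact absurd (h 2) (p52_odd (by norm_num) (oddAt _ (by decide)))
  · exact absurd (h 0) (p52_odd (by norm_num) (oddAt _ (by decide)))
  · exact absurd (h 0) (p52_odd (by norm_num) (oddAt _ (by decide)))
  · exact absurd (h 2) (p52_odd (by norm_num) (oddAt _ (by decide)))
  · exact absurd (h 0) (p52_odd (by norm_num) (oddAt _ (by decide)))
  · exact absurd (h 2) (p52_odd (by norm_num) (oddAt _ (by decide)))
  · decide
  · exact absurd (h 2) (p52_odd (by norm_num) (oddAt _ (by decide)))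
  · exact absurd (h 1) (p52_odd (by norm_num) (oddAt _ (by decide)))
  · exact absurd (h 0) (p52_odd (by norm_num) (oddAt _ (by decide)))
  · exact absurd (h 0) (p52_odd (by norm_num) (oddAt _ (by decide)))
  · exact absurd (h 2) (p52_odd (by norm_num) (oddAt _ (by decide)))
  · exact absurd (h 0) (p52_odd (by norm_num) (oddAt _ (by decide)))
  · decide
  · exact absurd (h 2) (p52_odd (by norm_num) (oddAt _ (by decide)))
  · exact absurd (h 4) (p52_odd (by norm_num) (oddAt _ (by decide)))
  · exact absurd (h 0) (p52_odd (by norm_num) (oddAt _ (by decide)))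
  · exact absurd (h 5) (p52_odd (by norm_num) (oddAt _ (by decide)))
  · exact absurd (h 0) (p52_odd (by norm_num) (oddAt _ (by decide)))
  · exact absurd (h 0) (p52_odd (by norm_num) (oddAt _ (by decide)))
  · decide
  · exact absurd (h 0) (p52_odd (by norm_num) (oddAt _ (by decide)))
  · exact absurd (h 2) (p52_odd (by norm_num) (oddAt _ (by decide)))
  · exact absurd (h 0) (p52_odd (by norm_num) (oddAt _ (by decide)))
  · exact absurd (h 1) (p52_odd (by norm_num) (oddAt _ (by decide)))
  · exact absurd (h 1) (p52_odd (by norm_num) (oddAt _ (by decide)))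
  · exact absurd (h 0) (p52_odd (by norm_num) (oddAt _ (by decide)))
  · exact absurd (h 0) (p52_odd (by norm_num) (oddAt _ (by decide)))
  · exact absurd (h 0) (p52_odd (by norm_num) (oddAt _ (by decide)))
  · exact absurd (h 1) (p52_odd (by norm_num) (oddAt _ (by decide)))
  · exact absurd (h 2) (p52_odd (by norm_num) (oddAt _ (by decide)))
  · exact absurd (h 0) (p52_odd (by norm_num) (oddAt _ (by decide)))
  · exact absurd (h 3) (p52_odd (by norm_num) (oddAt _ (by decide)))
  · exact absurd (h 0) (p52_odd (by norm_num) (oddAt _ (by decide)))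
  · decide
  · exact absurd (h 1) (p52_odd (by norm_num) (oddAt _ (by decide)))
  · exact absurd (h 0) (p52_odd (by norm_num) (oddAt _ (by decide)))
  · exact absurd (h 0) (p52_odd (by norm_num) (oddAt _ (by decide)))
  · exact absurd (h 1) (p52_odd (by norm_num) (oddAt _ (by decide)))
  · exact absurd (h 0) (p52_odd (by norm_num) (oddAt _ (by decide)))
  · exact absurd (h 0) (p52_odd (by norm_num) (oddAt _ (by decide)))
  · decide
  · exact absurd (h 0) (p52_odd (by norm_num) (oddAt _ (by decide)))
  · exact absurd (h 0) (p52_odd (by norm_num) (oddAt _ (by decide)))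
  · exact absurd (h 0) (p52_odd (by norm_num) (oddAt _ (by decide)))
  · exact absurd (h 0) (p52_odd (by norm_num) (oddAt _ (by decide)))
  · exact absurd (h 1) (p52_odd (by norm_num) (oddAt _ (by decide)))
  · exact absurd (h 2) (p52_odd (by norm_num) (oddAt _ (by decide)))
  · decide
  · exact absurd (h 0) (p52_odd (by norm_num) (oddAt _ (by decide)))
  · exact absurd (h 0) (p52_odd (by norm_num) (oddAt _ (by decide)))
  · exact absurd (h 0) (p52_odd (by norm_num) (oddAt _ (by decide)))
  · exact absurd (h 0) (p52_odd (by norm_num) (oddAt _ (by decide)))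
  · exact absurd (h 0) (p52_odd (by norm_num) (oddAt _ (by decide)))
  · exact absurd (h 0) (p52_odd (by norm_num) (oddAt _ (by decide)))
  · exact absurd (h 0) (p52_odd (by norm_num) (oddAt _ (by decide)))
  · exact absurd (h 0) (p52_odd (by norm_num) (oddAt _ (by decide)))
  · exact absurd (h 0) (p52_odd (by norm_num) (oddAt _ (by decide)))
  · exact absurd (h 1) (p52_odd (by norm_num) (oddAt _ (by decide)))
  · exact absurd (h 0) (p52_odd (by norm_num) (oddAt _ (by decide)))
  · exact absurd (h 0) (p52_odd (by norm_num) (oddAt _ (by decide)))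
  · exact absurd (h 0) (p52_odd (by norm_num) (oddAt _ (by decide)))
  · decide
  · exact absurd (h 0) (p52_odd (by norm_num) (oddAt _ (by decide)))
  · exact absurd (h 0) (p52_odd (by norm_num) (oddAt _ (by decide)))
  · exact absurd (h 0) (p52_odd (by norm_num) (oddAt _ (by decide)))
  · exact absurd (h 1) (p52_odd (by norm_num) (oddAt _ (by decide)))
  · exact absurd (h 0) (p52_odd (by norm_num) (oddAt _ (by decide)))
  · exact absurd (h 0) (p52_odd (by norm_num) (oddAt _ (by decide)))
  · exact absurd (h 0) (p52_odd (by norm_num) (oddAt _ (by decide)))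
  · exact absurd (h 0) (p52_odd (by norm_num) (oddAt _ (by decide)))
  · exact absurd (h 0) (p52_odd (by norm_num) (oddAt _ (by decide)))
  · exact absurd (h 0) (p52_odd (by norm_num) (oddAt _ (by decide)))
  · exact absurd (h 0) (p52_odd (by norm_num) (oddAt _ (by decide)))
  · exact absurd (h 1) (p52_odd (by norm_num) (oddAt _ (by decide)))
  · exact absurd (h 0) (p52_odd (by norm_num) (oddAt _ (by decide)))
  · decide
  · exact absurd (h 0) (p52_odd (by norm_num) (oddAt _ (by decide)))
  · exact absurd (h 0) (p52_odd (by norm_num) (oddAt _ (by decide)))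
  · exact absurd (h 1) (p52_odd (by norm_num) (oddAt _ (by decide)))
  · exact absurd (h 0) (p52_odd (by norm_num) (oddAt _ (by decide)))
  · exact absurd (h 0) (p52_odd (by norm_num) (oddAt _ (by decide)))
  · exact absurd (h 5) (p52_odd (by norm_num) (oddAt _ (by decide)))
  · decide
end
end

section
/- The rational number 24N·P(r) is an integer; moreover, if in addition r_{δ,g} ∈ ℤ for all (δ,g), then 12N·P(r) is an integer. -/
open scoped BigOperators

noncomputable section

lemma sum_exists_int {α : Type*} (s : Finset α) (f : α → ℚ)
    (h : ∀ x ∈ s, ∃ z : ℤ, f x = (z : ℚ)) : ∃ z : ℤ, ∑ x ∈ s, f x = (z : ℚ) := by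
  choose F hF using h
  refine ⟨∑ x ∈ s.attach, F x x.2, ?_⟩
  rw [← Finset.sum_attach s f]
  push_cast
  exact Finset.sum_congr rfl fun x _ => hF x x.2

lemma fract_div (δ g : ℕ) (hδ : 0 < δ) (hg : g < δ) :
    Int.fract ((g : ℚ) / (δ : ℚ)) = (g : ℚ) / (δ : ℚ) := by
  apply Int.fract_eq_self.mpr
  constructor
  · positivity
  · rw [div_lt_one (by exact_mod_cast hδ)]
    exact_mod_cast hg

lemma term12 (δ k g : ℕ) (hδ : 0 < δ) (hg : g < δ) (r : ℚ) (a : ℤ) (ha : 2 * r = (a : ℚ)) :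
    (12 : ℚ) * (↑(δ * k)) * ((δ : ℚ) * r * B2 ((g : ℚ) / (δ : ℚ)))
      = ((k * a * (6 * g ^ 2 - 6 * δ * g + δ ^ 2) : ℤ) : ℚ) := by
  have hδ0 : (δ : ℚ) ≠ 0 := by exact_mod_cast hδ.ne'
  rw [B2, fract_div δ g hδ hg]
  push_cast
  have hr : r = (a : ℚ) / 2 := by linarith
  rw [hr]
  field_simp
  ring

lemma term6 (δ k g : ℕ) (hδ : 0 < δ) (hg : g < δ) (r : ℚ) (b : ℤ) (hb : r = (b : ℚ)) :
    (6 : ℚ) * (↑(δ * k)) * ((δ : ℚ) * r * B2 ((g : ℚ) / (δ : ℚ)))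
      = ((k * b * (6 * g ^ 2 - 6 * δ * g + δ ^ 2) : ℤ) : ℚ) := by
  have hδ0 : (δ : ℚ) ≠ 0 := by exact_mod_cast hδ.ne'
  rw [B2, fract_div δ g hδ hg, hb]
  push_cast
  field_simp

/-- The denominator of `P(r)` divides `24N` (and even `12N` if all `r_{δ,g}` are integers). -/
theorem stmt15 (N : ℕ) (hN : 0 < N) (r : ℕ → ℕ → ℚ)
    (hr2 : ∀ δ g, ∃ z : ℤ, 2 * r δ g = (z : ℚ))
    (hrZ : ∀ δ g, g ≠ 0 → 2 * g ≠ δ → ∃ z : ℤ, r δ g = (z : ℚ)) :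
    (∃ z : ℤ, 24 * (N : ℚ) * Pr N r = (z : ℚ)) ∧
      ((∀ δ g, ∃ z : ℤ, r δ g = (z : ℚ)) → ∃ z : ℤ, 12 * (N : ℚ) * Pr N r = (z : ℚ)) := by
  constructor
  · have h1 : ∃ z : ℤ, ∑ δ ∈ N.divisors, ∑ g ∈ Finset.range δ,
        (12 : ℚ) * (N : ℚ) * ((δ : ℚ) * r δ g * B2 ((g : ℚ) / (δ : ℚ))) = (z : ℚ) := by
      apply sum_exists_int
      intro δ hδ
      apply sum_exists_int
      intro g hg
      obtain ⟨k, hk⟩ := (Nat.mem_divisors.mp hδ).1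
      have hδ0 : 0 < δ := Nat.pos_of_mem_divisors hδ
      obtain ⟨a, ha⟩ := hr2 δ g
      refine ⟨k * a * (6 * g ^ 2 - 6 * δ * g + δ ^ 2), ?_⟩
      rw [hk]
      exact term12 δ k g hδ0 (Finset.mem_range.mp hg) (r δ g) a ha
    obtain ⟨z, hz⟩ := h1
    refine ⟨z, ?_⟩
    rw [← hz, Pr]
    rw [Finset.mul_sum]
    simp only [Finset.mul_sum]
    apply Finset.sum_congr rfl
    intro δ _
    apply Finset.sum_congr rfl
    intro g _
    ring
  · intro hall
    have h1 : ∃ z : ℤ, ∑ δ ∈ N.divisors, ∑ g ∈ Finset.range δ,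
        (6 : ℚ) * (N : ℚ) * ((δ : ℚ) * r δ g * B2 ((g : ℚ) / (δ : ℚ))) = (z : ℚ) := by
      apply sum_exists_int
      intro δ hδ
      apply sum_exists_int
      intro g hg
      obtain ⟨k, hk⟩ := (Nat.mem_divisors.mp hδ).1
      have hδ0 : 0 < δ := Nat.pos_of_mem_divisors hδ
      obtain ⟨b, hb⟩ := hall δ g
      refine ⟨k * b * (6 * g ^ 2 - 6 * δ * g + δ ^ 2), ?_⟩
      rw [hk]
      exact term6 δ k g hδ0 (Finset.mem_range.mp hg) (r δ g) b hb
    obtain ⟨z, hz⟩ := h1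
    refine ⟨z, ?_⟩
    rw [← hz, Pr]
    rw [Finset.mul_sum]
    simp only [Finset.mul_sum]
    apply Finset.sum_congr rfl
    intro δ _
    apply Finset.sum_congr rfl
    intro g _
    ring
end
end
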